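/- Let Σ₁ be a compatible signed graph on m vertices with signed distance matrix eigenvalues λ₁ ≥ … ≥ λ_m, and let Σ₂ be the single positive edge K₂⁺. Then the signed distance matrix of the lexicographic product Σ₁[Σ₂] has eigenvalues 2λ_i + 1 for 1 ≤ i ≤ m, together with −1 of multiplicity m. -/

import Mathlib

open SimpleGraph

/-- The sign of a walk: the product of the signs of its edges. -/
def walkSign {V : Type*} {G : SimpleGraph V} (σ : V → V → ℤ) :
    {u v : V} → G.Walk u v → ℤ
  | _, _, SimpleGraph.Walk.nil => 1
  | _, _, @SimpleGraph.Walk.cons _ _ a b _ _ p => σ a b * walkSign σ p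

/-- A walk is a shortest path if its length equals the distance of its endpoints. -/
def IsShortest {V : Type*} {G : SimpleGraph V} {u v : V} (p : G.Walk u v) : Prop :=
  p.length = G.dist u v

/-- A signed graph is compatible if all shortest paths between any two vertices have
the same sign. -/
def Compatible {V : Type*} (G : SimpleGraph V) (σ : V → V → ℤ) : Prop :=
  ∀ (u v : V) (p q : G.Walk u v), IsShortest p → IsShortest q →
    walkSign σ p = walkSign σ q

/-- The lexicographic product of two graphs: `(a,b) ~ (c,d)` iff `a ~ c`,
or `a = c` and `b ~ d`. -/
def lexProd {V₁ V₂ : Type*} (G₁ : SimpleGraph V₁) (G₂ : SimpleGraph V₂) :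
    SimpleGraph (V₁ × V₂) where
  Adj x y := G₁.Adj x.1 y.1 ∨ (x.1 = y.1 ∧ G₂.Adj x.2 y.2)
  symm := by
    constructor
    rintro x y (h | ⟨h, h2⟩)
    · exact Or.inl h.symm
    · exact Or.inr ⟨h.symm, h2.symm⟩
  loopless := by
    constructor
    rintro x (h | ⟨_, h2⟩)
    · exact G₁.loopless.irrefl _ h
    · exact G₂.loopless.irrefl _ h2

/-- The signature of the lexicographic product of signed graphs. -/
def lexSign {V₁ V₂ : Type*} [DecidableEq V₁] (σ₁ : V₁ → V₁ → ℤ) (σ₂ : V₂ → V₂ → ℤ) :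
    V₁ × V₂ → V₁ × V₂ → ℤ :=
  fun x y => if x.1 = y.1 then σ₂ x.2 y.2 else σ₁ x.1 y.1

open Polynomial

/-! ### Auxiliary lemmas -/

section PolyAux

private lemma aux_comp_linear_inj (p r : ℝ[X])
    (h : p.comp (2 * X + 1) = r.comp (2 * X + 1)) : p = r := by
  have h2 : (p - r).comp (2 * X + 1) = 0 := by rw [Polynomial.sub_comp, h, sub_self]
  rcases Polynomial.comp_eq_zero_iff.mp h2 with h3 | ⟨-, h4⟩
  · exact sub_eq_zero.mp h3
  · exfalso
    have := congrArg (fun q : ℝ[X] => q.coeff 1) h4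
    simp [Polynomial.coeff_C] at this

private lemma aux_charpoly_two_smul_add_one {n : Type*} [Fintype n] [DecidableEq n] {m : ℕ}
    (hc : Fintype.card n = m) (M : Matrix n n ℝ) (lam : Fin m → ℝ)
    (h : M.charpoly = ∏ i : Fin m, (X - C (lam i))) :
    ((2 : ℝ) • M + 1).charpoly = ∏ i : Fin m, (X - C (2 * lam i + 1)) := by
  set q : ℝ[X] := 2 * X + 1 with hq
  set f : ℝ[X] →+* ℝ[X] := Polynomial.eval₂RingHom Polynomial.C q with hf
  have hfc : ∀ p : ℝ[X], f p = p.comp q := fun p => rfl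
  apply aux_comp_linear_inj
  have hmap : (Matrix.charmatrix ((2 : ℝ) • M + 1)).map f
      = (2 : ℝ[X]) • Matrix.charmatrix M := by
    ext i j
    by_cases hij : i = j
    · subst hij
      have e1 : ((2 : ℝ) • M + 1) i i = 2 * M i i + 1 := by
        simp [Matrix.add_apply, Matrix.smul_apply, Matrix.one_apply_eq]
      rw [Matrix.map_apply, Matrix.charmatrix_apply_eq, e1, hfc, Polynomial.sub_comp,
        Polynomial.X_comp, Polynomial.C_comp, Matrix.smul_apply, Matrix.charmatrix_apply_eq,
        map_add, map_mul, map_ofNat, map_one, hq, smul_eq_mul]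
      ring
    · have e1 : ((2 : ℝ) • M + 1) i j = 2 * M i j := by
        simp [Matrix.add_apply, Matrix.smul_apply, Matrix.one_apply_ne hij]
      rw [Matrix.map_apply, Matrix.charmatrix_apply_ne _ _ _ hij, e1, hfc,
        Polynomial.neg_comp, Polynomial.C_comp, Matrix.smul_apply,
        Matrix.charmatrix_apply_ne _ _ _ hij, map_mul, map_ofNat, smul_eq_mul]
      ring
  have lhs : (((2 : ℝ) • M + 1).charpoly).comp q = (2 : ℝ[X]) ^ m * M.charpoly := by
    rw [← hfc]
    show f (Matrix.charmatrix ((2 : ℝ) • M + 1)).det = _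
    rw [RingHom.map_det, RingHom.mapMatrix_apply, hmap, Matrix.det_smul, hc]
    rfl
  have rhs : (∏ i : Fin m, (X - C (2 * lam i + 1))).comp q
      = (2 : ℝ[X]) ^ m * ∏ i : Fin m, (X - C (lam i)) := by
    rw [Polynomial.prod_comp]
    have : ∀ i : Fin m, (X - C (2 * lam i + 1)).comp q = 2 * (X - C (lam i)) := by
      intro i
      rw [Polynomial.sub_comp, Polynomial.X_comp, Polynomial.C_comp, hq,
        map_add, map_mul, map_ofNat, map_one]
      ring
    rw [Finset.prod_congr rfl fun i _ => this i, Finset.prod_mul_distrib,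
      Finset.prod_const, Finset.card_univ, Fintype.card_fin]
  rw [lhs, rhs, h]

private lemma aux_charmatrix_sub {n : Type*} [Fintype n] [DecidableEq n] {R : Type*}
    [CommRing R] (A B : Matrix n n R) :
    Matrix.charmatrix (A - B) = Matrix.charmatrix A + B.map C := by
  ext i j
  by_cases hij : i = j
  · subst hij
    simp [Matrix.charmatrix_apply_eq, Matrix.sub_apply, map_sub]
    ring
  · simp [Matrix.charmatrix_apply_ne _ _ _ hij, Matrix.sub_apply, map_sub]
    ring

private lemma aux_charmatrix_add {n : Type*} [Fintype n] [DecidableEq n] {R : Type*}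
    [CommRing R] (A B : Matrix n n R) :
    Matrix.charmatrix (A + B) = Matrix.charmatrix A - B.map C := by
  ext i j
  by_cases hij : i = j
  · subst hij
    simp [Matrix.charmatrix_apply_eq, Matrix.add_apply, map_add]
    ring
  · simp [Matrix.charmatrix_apply_ne _ _ _ hij, Matrix.add_apply, map_add]
    ring

private lemma aux_charpoly_fromBlocks_comm {n : Type*} [Fintype n] [DecidableEq n] {R : Type*}
    [CommRing R] (A B : Matrix n n R) :
    (Matrix.fromBlocks A B B A).charpoly = (A - B).charpoly * (A + B).charpoly := by
  classical
  set P : Matrix n n R[X] := Matrix.charmatrix A with hP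
  set Q : Matrix n n R[X] := -(B.map C) with hQ
  have h1 : Matrix.charmatrix (Matrix.fromBlocks A B B A) = Matrix.fromBlocks P Q Q P :=
    Matrix.charmatrix_fromBlocks A B B A
  have h2 : Matrix.fromBlocks (1 : Matrix n n R[X]) 0 1 1 * Matrix.fromBlocks P Q Q P *
      Matrix.fromBlocks 1 0 (-1) 1 = Matrix.fromBlocks (P - Q) Q 0 (Q + P) := by
    rw [Matrix.fromBlocks_multiply, Matrix.fromBlocks_multiply]
    congr 1 <;> first
      | (congr 1 <;> noncomm_ring)
      | noncomm_ring
    all_goals rfl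
  have dL : (Matrix.fromBlocks (1 : Matrix n n R[X]) (0 : Matrix n n R[X])
      (1 : Matrix n n R[X]) (1 : Matrix n n R[X])).det = 1 := by
    rw [Matrix.det_fromBlocks_zero₁₂ 1 1 1, Matrix.det_one, mul_one]
  have dR : (Matrix.fromBlocks (1 : Matrix n n R[X]) (0 : Matrix n n R[X])
      (-1 : Matrix n n R[X]) (1 : Matrix n n R[X])).det = 1 := by
    rw [Matrix.det_fromBlocks_zero₁₂ 1 (-1) 1, Matrix.det_one, mul_one]
  have hdet : (Matrix.fromBlocks P Q Q P).det = (P - Q).det * (Q + P).det := by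
    calc (Matrix.fromBlocks P Q Q P).det
        = (Matrix.fromBlocks (1 : Matrix n n R[X]) 0 1 1).det *
            (Matrix.fromBlocks P Q Q P).det *
            (Matrix.fromBlocks (1 : Matrix n n R[X]) 0 (-1) 1).det := by rw [dL, dR]; ring
      _ = (Matrix.fromBlocks (1 : Matrix n n R[X]) 0 1 1 * Matrix.fromBlocks P Q Q P *
            Matrix.fromBlocks 1 0 (-1) 1).det := by rw [Matrix.det_mul, Matrix.det_mul]
      _ = (Matrix.fromBlocks (P - Q) Q 0 (Q + P)).det := by rw [h2]
      _ = (P - Q).det * (Q + P).det := Matrix.det_fromBlocks_zero₂₁ _ _ _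
  have hPQ1 : P - Q = Matrix.charmatrix (A - B) := by
    rw [aux_charmatrix_sub, hP, hQ]; abel
  have hPQ2 : Q + P = Matrix.charmatrix (A + B) := by
    rw [aux_charmatrix_add, hP, hQ]; abel
  show (Matrix.charmatrix (Matrix.fromBlocks A B B A)).det
    = (Matrix.charmatrix (A - B)).det * (Matrix.charmatrix (A + B)).det
  rw [h1, hdet, hPQ1, hPQ2]

private lemma aux_charpoly_neg_one {n : Type*} [Fintype n] [DecidableEq n] :
    (-1 : Matrix n n ℝ).charpoly = (X + 1) ^ Fintype.card n := by
  have h : Matrix.charmatrix (-1 : Matrix n n ℝ)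
      = ((X : ℝ[X]) + 1) • (1 : Matrix n n ℝ[X]) := by
    ext i j
    by_cases hij : i = j
    · subst hij
      simp [Matrix.charmatrix_apply_eq, Matrix.one_apply_eq]
    · simp [Matrix.charmatrix_apply_ne _ _ _ hij, Matrix.one_apply_ne hij]
  rw [Matrix.charpoly, h, Matrix.det_smul, Matrix.det_one, mul_one]

end PolyAux

section GraphAux

variable {V₁ : Type*} {G₁ : SimpleGraph V₁}

private lemma lex_adj_of_adj {a c : V₁} (h : G₁.Adj a c) (i j : Fin 2) :
    (lexProd G₁ (⊤ : SimpleGraph (Fin 2))).Adj (a, i) (c, j) := Or.inl h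

/-- Lift a walk in `G₁` to a walk in the lexicographic product with constant second
coordinate. -/
private def liftW (j : Fin 2) : {a b : V₁} → G₁.Walk a b →
    (lexProd G₁ (⊤ : SimpleGraph (Fin 2))).Walk (a, j) (b, j)
  | _, _, SimpleGraph.Walk.nil => SimpleGraph.Walk.nil
  | _, _, SimpleGraph.Walk.cons h p => SimpleGraph.Walk.cons (Or.inl h) (liftW j p)

private lemma liftW_length (j : Fin 2) {a b : V₁} (p : G₁.Walk a b) :
    (liftW j p).length = p.length := by
  induction p with
  | nil => rfl
  | cons h p ih => show (liftW j p).length + 1 = p.length + 1; rw [ih]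

private lemma liftW_sign [DecidableEq V₁] (σ₁ : V₁ → V₁ → ℤ) (σ₂ : Fin 2 → Fin 2 → ℤ)
    (j : Fin 2) {a b : V₁} (p : G₁.Walk a b) :
    walkSign (lexSign σ₁ σ₂) (liftW j p) = walkSign σ₁ p := by
  induction p with
  | nil => rfl
  | @cons a c b h p ih =>
    show lexSign σ₁ σ₂ (a, j) (c, j) * walkSign (lexSign σ₁ σ₂) (liftW j p)
      = σ₁ a c * walkSign σ₁ p
    rw [ih, lexSign]
    simp [h.ne]

private lemma aux_dist_le_walk_length (h₁ : G₁.Connected) {x y : V₁ × Fin 2}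
    (P : (lexProd G₁ (⊤ : SimpleGraph (Fin 2))).Walk x y) :
    G₁.dist x.1 y.1 ≤ P.length := by
  induction P with
  | nil => simp
  | @cons u v w h P ih =>
    rcases h with h | ⟨h, -⟩
    · have h1 : G₁.dist u.1 v.1 ≤ 1 := by
        simpa using SimpleGraph.dist_le (SimpleGraph.Walk.cons h SimpleGraph.Walk.nil)
      calc G₁.dist u.1 w.1 ≤ G₁.dist u.1 v.1 + G₁.dist v.1 w.1 := h₁.dist_triangle
        _ ≤ 1 + P.length := add_le_add h1 ih
        _ = (SimpleGraph.Walk.cons (Or.inl h) P).length := by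
            show _ = P.length + 1; omega
    · calc G₁.dist u.1 w.1 = G₁.dist v.1 w.1 := by rw [h]
        _ ≤ P.length := ih
        _ ≤ _ := by show _ ≤ P.length + 1; omega

private lemma aux_lex_dist_ne (h₁ : G₁.Connected) {a b : V₁} (hab : a ≠ b) (i j : Fin 2) :
    (lexProd G₁ (⊤ : SimpleGraph (Fin 2))).dist (a, i) (b, j) = G₁.dist a b := by
  obtain ⟨p, hp⟩ := (h₁.preconnected a b).exists_walk_length_eq_dist
  cases p with
  | nil => exact absurd rfl hab
  | @cons _ c _ h q =>
    have hW : (SimpleGraph.Walk.cons (lex_adj_of_adj h i j) (liftW j q) :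
        (lexProd G₁ (⊤ : SimpleGraph (Fin 2))).Walk (a, i) (b, j)).length = G₁.dist a b := by
      rw [SimpleGraph.Walk.length_cons, liftW_length]
      rw [SimpleGraph.Walk.length_cons] at hp
      omega
    refine le_antisymm ?_ ?_
    · rw [← hW]; exact SimpleGraph.dist_le _
    · obtain ⟨P, hP⟩ := SimpleGraph.Reachable.exists_walk_length_eq_dist
        ⟨SimpleGraph.Walk.cons (lex_adj_of_adj h i j) (liftW j q)⟩
      rw [← hP]
      exact aux_dist_le_walk_length h₁ P

end GraphAux

/-- Signed distance spectrum of the lexicographic product `Σ₁[K₂⁺]`: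
if `Σ₁` is a compatible signed graph on `m` vertices whose signed distance matrix has
eigenvalues `λ₁ ≥ … ≥ λ_m`, then `D(Σ₁[K₂⁺])` has eigenvalues `2λᵢ + 1` (for each `i`)
together with `−1` of multiplicity `m` (stated via the characteristic polynomial). -/
theorem lexProd_K2pos_distance_spectrum {V₁ : Type*} [Fintype V₁] [DecidableEq V₁]
    {m : ℕ} (hcard : Fintype.card V₁ = m)
    (G₁ : SimpleGraph V₁) (h₁ : G₁.Connected)
    (σ₁ : V₁ → V₁ → ℤ)
    (hσ₁ : ∀ u v : V₁, G₁.Adj u v → σ₁ u v = 1 ∨ σ₁ u v = -1)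
    (hsymm₁ : ∀ u v : V₁, σ₁ u v = σ₁ v u)
    -- `Σ₁` is compatible with common shortest-path signs `s₁`:
    (s₁ : V₁ → V₁ → ℤ)
    (hs₁ : ∀ (u v : V₁) (p : G₁.Walk u v), IsShortest p → walkSign σ₁ p = s₁ u v)
    -- the eigenvalues `λ₁ ≥ … ≥ λ_m` of the signed distance matrix of `Σ₁`:
    (lam : Fin m → ℝ) (hord : ∀ i j : Fin m, i ≤ j → lam j ≤ lam i)
    (hchar : (Matrix.of fun u v : V₁ => (s₁ u v : ℝ) * (G₁.dist u v : ℝ)).charpoly =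
      ∏ i : Fin m, (X - C (lam i)))
    -- `Σ₂ = K₂⁺`, a single positive edge:
    (σ₂ : Fin 2 → Fin 2 → ℤ) (hσ₂ : ∀ u v : Fin 2, σ₂ u v = 1)
    -- the lexicographic product is compatible, with common shortest-path sign `sL`:
    (sL : V₁ × Fin 2 → V₁ × Fin 2 → ℤ)
    (hsL : ∀ (x y : V₁ × Fin 2)
      (P : (lexProd G₁ (⊤ : SimpleGraph (Fin 2))).Walk x y), IsShortest P →
        walkSign (lexSign σ₁ σ₂) P = sL x y) :
    (Matrix.of fun x y : V₁ × Fin 2 =>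
        (sL x y : ℝ) * ((lexProd G₁ (⊤ : SimpleGraph (Fin 2))).dist x y : ℝ)).charpoly =
      (∏ i : Fin m, (X - C (2 * lam i + 1))) * (X + 1) ^ m := by
  classical
  set D : Matrix V₁ V₁ ℝ := Matrix.of fun u v : V₁ => (s₁ u v : ℝ) * (G₁.dist u v : ℝ)
    with hD
  set DL : Matrix (V₁ × Fin 2) (V₁ × Fin 2) ℝ := Matrix.of fun x y : V₁ × Fin 2 =>
    (sL x y : ℝ) * ((lexProd G₁ (⊤ : SimpleGraph (Fin 2))).dist x y : ℝ) with hDL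
  have hDaa : ∀ a : V₁, D a a = 0 := by
    intro a
    simp [hD, SimpleGraph.dist_self]
  have hdiag : ∀ (a : V₁) (i : Fin 2), DL (a, i) (a, i) = 0 := by
    intro a i
    simp [hDL, SimpleGraph.dist_self]
  have hsame : ∀ (a : V₁) (i j : Fin 2), i ≠ j → DL (a, i) (a, j) = 1 := by
    intro a i j hij
    have hadj : (lexProd G₁ (⊤ : SimpleGraph (Fin 2))).Adj (a, i) (a, j) :=
      Or.inr ⟨rfl, (SimpleGraph.top_adj i j).mpr hij⟩
    have hle : (lexProd G₁ (⊤ : SimpleGraph (Fin 2))).dist (a, i) (a, j) ≤ 1 := by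
      simpa using SimpleGraph.dist_le (SimpleGraph.Walk.cons hadj SimpleGraph.Walk.nil)
    have hne : (lexProd G₁ (⊤ : SimpleGraph (Fin 2))).dist (a, i) (a, j) ≠ 0 := by
      rw [Ne, SimpleGraph.dist_eq_zero_iff_eq_or_not_reachable]
      push_neg
      exact ⟨by simp [hij], hadj.reachable⟩
    have hd1 : (lexProd G₁ (⊤ : SimpleGraph (Fin 2))).dist (a, i) (a, j) = 1 := by omega
    have hshort : IsShortest (SimpleGraph.Walk.cons hadj SimpleGraph.Walk.nil) := by
      show (SimpleGraph.Walk.cons hadj SimpleGraph.Walk.nil).length = _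
      rw [hd1]
      rfl
    have hsign := hsL (a, i) (a, j) (SimpleGraph.Walk.cons hadj SimpleGraph.Walk.nil) hshort
    have hval : walkSign (lexSign σ₁ σ₂) (SimpleGraph.Walk.cons hadj SimpleGraph.Walk.nil)
        = σ₂ i j := by
      show lexSign σ₁ σ₂ (a, i) (a, j) * 1 = σ₂ i j
      rw [mul_one, lexSign]
      simp
    have hsl1 : sL (a, i) (a, j) = 1 := by rw [← hsign, hval, hσ₂]
    simp [hDL, hd1, hsl1]
  have hdiff : ∀ a b : V₁, a ≠ b → ∀ i j : Fin 2, DL (a, i) (b, j) = D a b := by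
    intro a b hab i j
    have hd := aux_lex_dist_ne (G₁ := G₁) h₁ hab i j
    obtain ⟨p, hp⟩ := (h₁.preconnected a b).exists_walk_length_eq_dist
    cases p with
    | nil => exact absurd rfl hab
    | @cons _ c _ h q =>
      set W : (lexProd G₁ (⊤ : SimpleGraph (Fin 2))).Walk (a, i) (b, j) :=
        SimpleGraph.Walk.cons (lex_adj_of_adj h i j) (liftW j q) with hW
      have hWshort : IsShortest W := by
        show W.length = _
        rw [hW, SimpleGraph.Walk.length_cons, liftW_length, hd]
        rw [SimpleGraph.Walk.length_cons] at hp
        omega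
      have h1' := hsL _ _ W hWshort
      have h2' : walkSign (lexSign σ₁ σ₂) W = walkSign σ₁ (SimpleGraph.Walk.cons h q) := by
        show lexSign σ₁ σ₂ (a, i) (c, j) * walkSign (lexSign σ₁ σ₂) (liftW j q)
          = σ₁ a c * walkSign σ₁ q
        rw [liftW_sign, lexSign]
        simp [h.ne]
      have h3' := hs₁ a b (SimpleGraph.Walk.cons h q) hp
      have hsl : sL (a, i) (b, j) = s₁ a b := by rw [← h1', h2', h3']
      simp [hDL, hD, hd, hsl]
  -- the reindexing equivalence
  let e : V₁ × Fin 2 ≃ V₁ ⊕ V₁ :=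
    { toFun := fun x => if x.2 = 0 then Sum.inl x.1 else Sum.inr x.1
      invFun := Sum.elim (fun a => (a, 0)) (fun a => (a, 1))
      left_inv := by rintro ⟨a, i⟩; fin_cases i <;> simp
      right_inv := by rintro (a | a) <;> simp }
  have hre : Matrix.reindex e e DL = Matrix.fromBlocks D (D + 1) (D + 1) D := by
    ext x y
    cases x with
    | inl a =>
      cases y with
      | inl b =>
        show DL (a, 0) (b, 0) = D a b
        by_cases hab : a = b
        · subst hab; rw [hdiag, hDaa]
        · exact hdiff a b hab 0 0
      | inr b =>
        show DL (a, 0) (b, 1) = (D + 1) a b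
        by_cases hab : a = b
        · subst hab
          rw [hsame a 0 1 (by decide), Matrix.add_apply, Matrix.one_apply_eq, hDaa, zero_add]
        · rw [hdiff a b hab, Matrix.add_apply, Matrix.one_apply_ne hab, add_zero]
    | inr a =>
      cases y with
      | inl b =>
        show DL (a, 1) (b, 0) = (D + 1) a b
        by_cases hab : a = b
        · subst hab
          rw [hsame a 1 0 (by decide), Matrix.add_apply, Matrix.one_apply_eq, hDaa, zero_add]
        · rw [hdiff a b hab, Matrix.add_apply, Matrix.one_apply_ne hab, add_zero]
      | inr b =>
        show DL (a, 1) (b, 1) = D a b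
        by_cases hab : a = b
        · subst hab; rw [hdiag, hDaa]
        · exact hdiff a b hab 1 1
  have hstep : DL.charpoly = (Matrix.fromBlocks D (D + 1) (D + 1) D).charpoly := by
    rw [← Matrix.charpoly_reindex e DL, hre]
  have h1 : D - (D + 1) = (-1 : Matrix V₁ V₁ ℝ) := by
    rw [sub_add_eq_sub_sub, sub_self, zero_sub]
  have h2 : D + (D + 1) = (2 : ℝ) • D + 1 := by
    rw [two_smul, add_assoc]
  rw [hstep, aux_charpoly_fromBlocks_comm, h1, h2, aux_charpoly_neg_one,
    aux_charpoly_two_smul_add_one hcard D lam hchar, hcard, mul_comm]
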